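/- (Lemma 5 core) Let q be prime, k ≥ 1, g : Fin k → ZMod q, and suppose there exists a nonzero i : Fin k → ℕ with i_j ≤ L for all j such that ∑_j i_j • g_j = 0 in ZMod q. Then for every natural number M, the number of x ∈ ZMod q expressible as x = ∑_j m_j • g_j with m : Fin k → ℕ and m_j ≤ M for all j is at most k·(L+1)·(M+1)^(k−1). In particular, if k·(L+1)·(M+1)^(k−1) < q then some x ∈ ZMod q has no such representation and Diam(q,k,g) > M. -/
import Mathlib


/-- `Diam q k g` is the least `N : ℕ` such that every `x : ZMod q` can be written as
`x = ∑ j, i j • g j` with `∑ j, i j ≤ N`, and `⊤` if no such `N` exists. -/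
noncomputable def Diam (q k : ℕ) (g : Fin k → ZMod q) : ℕ∞ :=
  sInf ((↑) '' {N : ℕ | ∀ x : ZMod q, ∃ i : Fin k → ℕ,
    (∑ j, i j) ≤ N ∧ x = ∑ j, (i j) • g j})

lemma reduce_rep {q n : ℕ} (g : Fin (n+1) → ZMod q) (i : Fin (n+1) → ℕ)
    (hi0 : ∃ j, 0 < i j) (hrel : ∑ j, (i j) • g j = 0) (M : ℕ) :
    ∀ N (m : Fin (n+1) → ℕ), (∑ j, m j) ≤ N → (∀ j, m j ≤ M) →
      ∃ m' : Fin (n+1) → ℕ, (∀ j, m' j ≤ M) ∧ (∃ j, m' j < i j) ∧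
        ∑ j, (m' j) • g j = ∑ j, (m j) • g j := by
  intro N
  induction N with
  | zero =>
    intro m hsum hM
    obtain ⟨j0, hj0⟩ := hi0
    have hm0 : ∀ j, m j = 0 := by
      intro j
      have := Finset.single_le_sum (f := m) (fun j _ => Nat.zero_le _) (Finset.mem_univ j)
      omega
    exact ⟨m, hM, ⟨j0, by rw [hm0 j0]; exact hj0⟩, rfl⟩
  | succ N ih =>
    intro m hsum hM
    by_cases hlt : ∃ j, m j < i j
    · exact ⟨m, hM, hlt, rfl⟩
    · push_neg at hlt
      obtain ⟨j0, hj0⟩ := hi0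
      set m' : Fin (n+1) → ℕ := fun j => m j - i j with hm'
      have hsum' : ∑ j, m' j + ∑ j, i j = ∑ j, m j := by
        rw [← Finset.sum_add_distrib]
        exact Finset.sum_congr rfl (fun j _ => by have := hlt j; simp [hm']; omega)
      have hipos : 0 < ∑ j, i j :=
        lt_of_lt_of_le hj0 (Finset.single_le_sum (fun j _ => Nat.zero_le _) (Finset.mem_univ j0))
      have hle : ∑ j, m' j ≤ N := by omega
      have heq : ∑ j, (m' j) • g j = ∑ j, (m j) • g j := by
        have : ∑ j, (m j) • g j = ∑ j, (m' j) • g j + ∑ j, (i j) • g j := by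
          rw [← Finset.sum_add_distrib]
          refine Finset.sum_congr rfl (fun j _ => ?_)
          rw [← add_smul]
          congr 1
          have := hlt j
          simp [hm']
          omega
        rw [this, hrel, add_zero]
      have hM' : ∀ j, m' j ≤ M := fun j => le_trans (Nat.sub_le _ _) (hM j)
      obtain ⟨m'', h1, h2, h3⟩ := ih m' hle hM'
      exact ⟨m'', h1, h2, h3.trans heq⟩

/-- (Lemma 5 core) For `q` prime, `k ≥ 1` and `g : Fin k → ZMod q`, if some nonzero
`i : Fin k → ℕ` with all entries `≤ L` satisfies `∑ j, i j • g j = 0`, then for every `M`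
the number of `x : ZMod q` expressible as `∑ j, m j • g j` with all `m j ≤ M` is at most
`k(L+1)(M+1)^(k-1)`; in particular, if `k(L+1)(M+1)^(k-1) < q` then some `x` has no such
representation and `Diam(q,k,g) > M`. -/
theorem relation_bounds_reachable (q k : ℕ) (hq : Nat.Prime q) (hk : 1 ≤ k)
    (g : Fin k → ZMod q) (L : ℕ)
    (hrel : ∃ i : Fin k → ℕ, i ≠ 0 ∧ (∀ j, i j ≤ L) ∧ ∑ j, (i j) • g j = 0)
    (M : ℕ) :
    Nat.card {x : ZMod q | ∃ m : Fin k → ℕ, (∀ j, m j ≤ M) ∧ x = ∑ j, (m j) • g j}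
        ≤ k * (L + 1) * (M + 1) ^ (k - 1) ∧
      (k * (L + 1) * (M + 1) ^ (k - 1) < q →
        (∃ x : ZMod q, ¬ ∃ m : Fin k → ℕ, (∀ j, m j ≤ M) ∧ x = ∑ j, (m j) • g j) ∧
          (M : ℕ∞) < Diam q k g) := by
  obtain ⟨n, rfl⟩ : ∃ n, k = n + 1 := ⟨k - 1, by omega⟩
  obtain ⟨i, hi0, hiL, hirel⟩ := hrel
  have hi0' : ∃ j, 0 < i j := by
    by_contra h
    push_neg at h
    exact hi0 (funext fun j => by have := h j; simp only [Pi.zero_apply]; omega)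
  set S := {x : ZMod q | ∃ m : Fin (n+1) → ℕ, (∀ j, m j ≤ M) ∧ x = ∑ j, (m j) • g j} with hS
  -- every element of S has a "reduced" representation
  have hred : ∀ x ∈ S, ∃ m : Fin (n+1) → ℕ, (∀ j, m j ≤ M) ∧ (∃ j, m j < i j) ∧
      x = ∑ j, (m j) • g j := by
    rintro x ⟨m, hm, rfl⟩
    obtain ⟨m', h1, h2, h3⟩ := reduce_rep g i hi0' hirel M (∑ j, m j) m le_rfl hm
    exact ⟨m', h1, h2, h3.symm⟩
  -- injection from S into a finite type
  have hcard : Nat.card S ≤ (n+1) * (L + 1) * (M + 1) ^ n := by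
    classical
    set T := Fin (n+1) × Fin (L+1) × (Fin n → Fin (M+1)) with hT
    have : Nat.card T = (n+1) * ((L+1) * (M+1)^n) := by
      simp [hT, Nat.card_eq_fintype_card, mul_comm]
    rw [show (n+1) * (L + 1) * (M + 1) ^ n = (n+1) * ((L+1) * (M+1)^n) by ring, ← this]
    have Φdef : ∀ x : S, ∃ m : Fin (n+1) → ℕ, (∀ j, m j ≤ M) ∧ (∃ j, m j < i j) ∧
        (x : ZMod q) = ∑ j, (m j) • g j := fun x => hred x x.2
    choose m hmM hmlt hmx using Φdef
    choose j hj using hmlt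
    refine Nat.card_le_card_of_injective
      (fun x => (⟨j x, ⟨m x (j x), by have := hiL (j x); have := hj x; omega⟩,
        fun t => ⟨m x ((j x).succAbove t), by have := hmM x ((j x).succAbove t); omega⟩⟩ : T))
      ?_
    intro x y hxy
    have hjeq : j x = j y := congrArg Prod.fst hxy
    have hval : m x (j x) = m y (j y) := congrArg (fun p => (p.2.1 : ℕ)) hxy
    have hrest : ∀ s, m x ((j x).succAbove s) = m y ((j y).succAbove s) :=
      fun s => congrArg (fun p => (p.2.2 s : ℕ)) hxy
    have hmeq : m x = m y := by
      funext t
      by_cases ht : t = j x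
      · rw [ht, hval, hjeq]
      · obtain ⟨s, hs⟩ := Fin.exists_succAbove_eq ht
        rw [← hs, hrest s, hjeq]
    have : (x : ZMod q) = (y : ZMod q) := by rw [hmx x, hmx y, hmeq]
    exact Subtype.ext this
  have hcard' : Nat.card S ≤ (n+1) * (L + 1) * (M + 1) ^ (n+1-1) := by simpa using hcard
  refine ⟨hcard', fun hlt => ?_⟩
  have hlt' : (n+1) * (L + 1) * (M + 1) ^ n < q := by simpa using hlt
  have hqcard : Nat.card (ZMod q) = q := Nat.card_zmod q
  have : NeZero q := ⟨hq.ne_zero⟩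
  have hSne : ∃ x : ZMod q, x ∉ S := by
    by_contra h
    push_neg at h
    have : S = Set.univ := Set.eq_univ_of_forall h
    rw [this] at hcard
    simp only [Nat.card_univ, hqcard] at hcard
    omega
  obtain ⟨x, hx⟩ := hSne
  refine ⟨⟨x, hx⟩, ?_⟩
  have : ((M : ℕ∞) + 1) ≤ Diam q (n+1) g := by
    apply le_sInf
    rintro b ⟨N, hN, rfl⟩
    simp only [Set.mem_setOf_eq] at hN
    by_contra hb
    push_neg at hb
    have hNM : N ≤ M := by
      have := hb
      rw [show ((M : ℕ∞) + 1) = ((M + 1 : ℕ) : ℕ∞) by push_cast; ring] at this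
      exact_mod_cast Nat.lt_succ_iff.mp (by exact_mod_cast this)
    obtain ⟨i', hi'sum, hi'x⟩ := hN x
    refine hx ⟨i', fun j => ?_, hi'x⟩
    have := Finset.single_le_sum (f := i') (fun j _ => Nat.zero_le _) (Finset.mem_univ j)
    omega
  have h1 : (M : ℕ∞) < ((M + 1 : ℕ) : ℕ∞) := by exact_mod_cast Nat.lt_succ_self M
  have h2 : ((M + 1 : ℕ) : ℕ∞) = (M : ℕ∞) + 1 := by push_cast; ring
  exact lt_of_lt_of_le (h2 ▸ h1) this
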